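/- (Sign condition at the controlled end.) If λ is an eigenvalue of the Boussinesq spectral problem and φ is an associated eigenfunction, then φ'(l) · Tφ(l) < 0, where Tφ = (σφ'')' − qφ', i.e. φ'(l) · ((σφ'')'(l) − q(l)φ'(l)) < 0. -/

import Mathlib

open Set intervalIntegral MeasureTheory Filter Topology

set_option maxHeartbeats 1000000

noncomputable section

/-- The fourth-order Boussinesq differential operator `φ ↦ (σ φ'')'' − (q φ')'`. -/
def boussinesqOp (σ q : ℝ → ℝ) (φ : ℝ → ℝ) : ℝ → ℝ :=
  fun x => deriv (deriv (fun t => σ t * deriv (deriv φ) t)) x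
    - deriv (fun t => q t * deriv φ t) x

/-- `φ` is a (nontrivial) eigenfunction of the Boussinesq spectral problem on `[0,l]`
with eigenvalue `lam`: it is `C⁴`, not identically zero on `[0,l]`, satisfies
`(σ φ'')'' − (q φ')' = lam ρ φ` on `[0,l]` and the boundary conditions
`φ(0) = φ''(0) = φ(l) = φ''(l) = 0`. -/
def IsBoussinesqEigenpair (σ q ρ : ℝ → ℝ) (l lam : ℝ) (φ : ℝ → ℝ) : Prop :=
  ContDiff ℝ 4 φ ∧ (∃ x ∈ Icc (0:ℝ) l, φ x ≠ 0) ∧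
    (∀ x ∈ Icc (0:ℝ) l, boussinesqOp σ q φ x = lam * ρ x * φ x) ∧
    φ 0 = 0 ∧ deriv (deriv φ) 0 = 0 ∧ φ l = 0 ∧ deriv (deriv φ) l = 0

/-- `lam` is an eigenvalue of the Boussinesq spectral problem on `[0,l]`. -/
def IsBoussinesqEigenvalue (σ q ρ : ℝ → ℝ) (l lam : ℝ) : Prop :=
  ∃ φ : ℝ → ℝ, IsBoussinesqEigenpair σ q ρ l lam φ

lemma zero_of_accum {f : ℝ → ℝ} {l : ℝ} (hf : Continuous f)
    (h : ∀ ε > 0, ∃ x, |x - l| < ε ∧ f x = 0) : f l = 0 := by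
  by_contra hne
  have hpos : 0 < |f l| := abs_pos.mpr hne
  obtain ⟨δ, hδ, hb⟩ := Metric.continuous_iff.mp hf l |f l| hpos
  obtain ⟨x, hx1, hx2⟩ := h δ hδ
  have h2 := hb x (by rwa [Real.dist_eq])
  rw [hx2, Real.dist_eq, zero_sub, abs_neg] at h2
  exact lt_irrefl _ h2

lemma vanish_backward {E : Type*} [NormedAddCommGroup E] [NormedSpace ℝ E] {f F : ℝ → E}
    {a b K : ℝ}
    (hd : ∀ t ∈ Icc a b, HasDerivAt f (F t) t)
    (hb : ∀ t ∈ Icc a b, ‖F t‖ ≤ K * ‖f t‖)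
    (h0 : f b = 0) : ∀ t ∈ Icc a b, f t = 0 := by
  rcases le_or_gt a b with hab | hab
  · have hmem : ∀ t ∈ Icc a b, a + b - t ∈ Icc a b := by
      intro t ht; exact ⟨by linarith [ht.2], by linarith [ht.1]⟩
    have hfc : ContinuousOn f (Icc a b) := fun t ht => (hd t ht).continuousAt.continuousWithinAt
    have key : ∀ t ∈ Icc a b, ‖(fun s => f (a + b - s)) t‖ ≤ gronwallBound 0 K 0 (t - a) := by
      apply norm_le_gronwallBound_of_norm_deriv_right_le
        (f' := fun s => -F (a + b - s))
      · exact hfc.comp (by fun_prop) (fun t ht => hmem t ht)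
      · intro x hx
        have hx' : a + b - x ∈ Icc a b := hmem x ⟨hx.1, le_of_lt hx.2⟩
        have h1 : HasDerivAt (fun s : ℝ => a + b - s) (-1) x := by
          simpa using ((hasDerivAt_id x).const_sub (a + b))
        have := (hd _ hx').scomp x h1
        simpa [Function.comp_def] using this.hasDerivWithinAt
      · simp [show a + b - a = b by ring, h0]
      · intro x hx
        have hx' : a + b - x ∈ Icc a b := hmem x ⟨hx.1, le_of_lt hx.2⟩
        simpa using (hb _ hx').trans (by simp)
    intro t ht
    have h2 := key (a + b - t) (hmem t ht)
    rw [gronwallBound_ε0_δ0] at h2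
    have h3 : ‖f (a + b - (a + b - t))‖ ≤ 0 := h2
    rw [show a + b - (a + b - t) = t by ring] at h3
    simpa using le_antisymm h3 (norm_nonneg _)
  · intro t ht; exact absurd (ht.1.trans ht.2) (not_le.mpr hab)

lemma near_left {P : ℝ → Prop} {l x₀ : ℝ} (hx₀l : x₀ < l) (h : {x | P x} ∈ 𝓝 l) :
    ∃ c, x₀ ≤ c ∧ c < l ∧ ∀ s ∈ Ioo c l, P s := by
  obtain ⟨ε, hε, hball⟩ := Metric.mem_nhds_iff.mp h
  refine ⟨max x₀ (l - ε/2), le_max_left _ _, max_lt hx₀l (by linarith), ?_⟩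
  intro s hs
  apply hball
  rw [Real.ball_eq_Ioo]
  have h1 := lt_of_le_of_lt (le_max_right x₀ (l - ε/2)) hs.1
  exact ⟨by linarith, by linarith [hs.2]⟩

lemma near_pt {P : ℝ → Prop} {m x₀ : ℝ} (hx₀m : x₀ < m) (h : {x | P x} ∈ 𝓝 m) :
    ∃ c, x₀ ≤ c ∧ c < m ∧ ∀ s ∈ Ioc c m, P s := by
  obtain ⟨ε, hε, hball⟩ := Metric.mem_nhds_iff.mp h
  refine ⟨max x₀ (m - ε/2), le_max_left _ _, max_lt hx₀m (by linarith), ?_⟩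
  intro s hs
  apply hball
  rw [Real.ball_eq_Ioo]
  have h1 := lt_of_le_of_lt (le_max_right x₀ (m - ε/2)) hs.1
  exact ⟨by linarith, by linarith [hs.2]⟩

lemma boussinesq_key (l lam x₀ : ℝ) (σ q ρ φ u w ψ : ℝ → ℝ)
    (hcφ : Continuous φ) (hcu : Continuous u) (hcw : Continuous w) (hcψ : Continuous ψ)
    (hcq : Continuous q)
    (hdφ : ∀ x, HasDerivAt φ (u x) x)
    (hdu : ∀ x ∈ Icc (0:ℝ) l, HasDerivAt u (w x / σ x) x)
    (hdw : ∀ x, HasDerivAt w (ψ x + q x * u x) x)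
    (hdψ : ∀ x ∈ Icc (0:ℝ) l, HasDerivAt ψ (lam * ρ x * φ x) x)
    (hρpos : ∀ x ∈ Icc (0:ℝ) l, 0 < ρ x) (hσpos : ∀ x ∈ Icc (0:ℝ) l, 0 < σ x)
    (hq0 : ∀ x ∈ Icc (0:ℝ) l, 0 ≤ q x)
    (hlam : 0 < lam)
    (hx₀0 : 0 ≤ x₀) (hx₀l : x₀ < l)
    (hφx₀ : φ x₀ = 0)
    (hpos : ∀ x ∈ Ioo x₀ l, 0 < φ x)
    (hφl : φ l = 0) (hwl : w l = 0)
    (hjet : ¬(u l = 0 ∧ ψ l = 0)) :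
    u l < 0 ∧ 0 < ψ l := by
  have hsub : ∀ s, x₀ < s → s ≤ l → s ∈ Icc (0:ℝ) l := fun s h1 h2 => ⟨le_of_lt (lt_of_le_of_lt hx₀0 h1), h2⟩
  have hlmem : l ∈ Icc x₀ l := right_mem_Icc.mpr hx₀l.le
  -- u l ≤ 0
  have hul : u l ≤ 0 := by
    have hslope : Tendsto (slope φ l) (𝓝[<] l) (𝓝 (u l)) :=
      (hasDerivAt_iff_tendsto_slope.mp (hdφ l)).mono_left
        (nhdsWithin_mono l fun x hx => ne_of_lt hx)
    refine le_of_tendsto hslope ?_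
    filter_upwards [Ioo_mem_nhdsLT_of_mem (⟨hx₀l, le_rfl⟩ : l ∈ Ioc x₀ l)] with s hs
    have h1 : 0 < φ s := hpos s hs
    have h2 : s - l < 0 := sub_neg.mpr hs.2
    rw [slope_def_field, div_eq_mul_inv]
    apply mul_nonpos_of_nonneg_of_nonpos
    · rw [hφl]; linarith
    · exact le_of_lt (inv_neg''.mpr h2)
  -- ψ strictly monotone on [x₀, l]
  have hψmono : StrictMonoOn ψ (Icc x₀ l) := by
    apply strictMonoOn_of_deriv_pos (convex_Icc _ _) hcψ.continuousOn
    intro x hx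
    rw [interior_Icc] at hx
    rw [(hdψ x (hsub x hx.1 hx.2.le)).deriv]
    exact mul_pos (mul_pos hlam (hρpos x (hsub x hx.1 hx.2.le))) (hpos x hx)
  -- Part I : 0 < ψ l
  have hψl : 0 < ψ l := by
    by_contra hcon
    push_neg at hcon
    have hψneg : ∀ s ∈ Ico x₀ l, ψ s < 0 :=
      fun s hs => lt_of_lt_of_le (hψmono ⟨hs.1, hs.2.le⟩ hlmem hs.2) hcon
    -- seed
    have seed : ∃ c, x₀ ≤ c ∧ c < l ∧ ∀ s ∈ Ioo c l, u s < 0 ∧ 0 < w s := by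
      rcases lt_or_eq_of_le hul with hul' | hul'
      · -- u l < 0 : first u < 0 near l, then w anti
        obtain ⟨c, hc1, hc2, hc3⟩ := near_left (P := fun x => u x < 0) hx₀l
          ((isOpen_lt hcu continuous_const).mem_nhds hul')
        refine ⟨c, hc1, hc2, fun s hs => ⟨hc3 s hs, ?_⟩⟩
        have hwanti : StrictAntiOn w (Icc c l) := by
          apply strictAntiOn_of_deriv_neg (convex_Icc _ _) hcw.continuousOn
          intro x hx
          rw [interior_Icc] at hx
          rw [(hdw x).deriv]
          have hql : q x * u x ≤ 0 := mul_nonpos_of_nonneg_of_nonpos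
            (hq0 x (hsub x (lt_of_le_of_lt hc1 hx.1) hx.2.le)) (hc3 x hx).le
          have : ψ x < 0 := hψneg x ⟨hc1.trans hx.1.le, hx.2⟩
          linarith
        have := hwanti (⟨hs.1.le, hs.2.le⟩ : s ∈ Icc c l) (right_mem_Icc.mpr hc2.le) hs.2
        rwa [hwl] at this
      · -- u l = 0, so ψ l < 0
        have hψl' : ψ l < 0 := by
          rcases lt_or_eq_of_le hcon with h | h
          · exact h
          · exact absurd ⟨hul', h⟩ hjet
        have hWl : ψ l + q l * u l < 0 := by rw [hul', mul_zero, add_zero]; exact hψl'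
        obtain ⟨c, hc1, hc2, hc3⟩ := near_left (P := fun x => ψ x + q x * u x < 0) hx₀l
          ((isOpen_lt (by continuity) continuous_const).mem_nhds hWl)
        have hwanti : StrictAntiOn w (Icc c l) := by
          apply strictAntiOn_of_deriv_neg (convex_Icc _ _) hcw.continuousOn
          intro x hx
          rw [interior_Icc] at hx
          rw [(hdw x).deriv]
          exact hc3 x hx
        have hwpos : ∀ s ∈ Ioo c l, 0 < w s := by
          intro s hs
          have := hwanti (⟨hs.1.le, hs.2.le⟩ : s ∈ Icc c l) (right_mem_Icc.mpr hc2.le) hs.2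
          rwa [hwl] at this
        have humono : StrictMonoOn u (Icc c l) := by
          apply strictMonoOn_of_deriv_pos (convex_Icc _ _) hcu.continuousOn
          intro x hx
          rw [interior_Icc] at hx
          have hx' : x ∈ Icc (0:ℝ) l := hsub x (lt_of_le_of_lt hc1 hx.1) hx.2.le
          rw [(hdu x hx').deriv]
          exact div_pos (hwpos x hx) (hσpos x hx')
        refine ⟨c, hc1, hc2, fun s hs => ⟨?_, hwpos s hs⟩⟩
        have := humono (⟨hs.1.le, hs.2.le⟩ : s ∈ Icc c l) (right_mem_Icc.mpr hc2.le) hs.2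
        rwa [hul'] at this
    obtain ⟨c, hcx₀, hcl, hc⟩ := seed
    set A := {x | x ∈ Icc x₀ l ∧ ∀ s ∈ Ioo x l, u s < 0 ∧ 0 < w s} with hA
    have hcA : c ∈ A := ⟨⟨hcx₀, hcl.le⟩, hc⟩
    have hAne : A.Nonempty := ⟨c, hcA⟩
    have hAbdd : BddBelow A := ⟨x₀, fun x hx => hx.1.1⟩
    have hmx₀ : x₀ ≤ sInf A := le_csInf hAne fun x hx => hx.1.1
    have hml : sInf A < l := lt_of_le_of_lt (csInf_le hAbdd hcA) hcl
    have hgood : ∀ s ∈ Ioo (sInf A) l, u s < 0 ∧ 0 < w s := by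
      intro s hs
      obtain ⟨x, hxA, hxs⟩ := exists_lt_of_csInf_lt hAne hs.1
      exact hxA.2 s ⟨hxs, hs.2⟩
    have hmm : sInf A = x₀ := by
      by_contra hne
      have hx₀m : x₀ < sInf A := lt_of_le_of_ne hmx₀ (Ne.symm hne)
      have hwanti : StrictAntiOn w (Icc (sInf A) l) := by
        apply strictAntiOn_of_deriv_neg (convex_Icc _ _) hcw.continuousOn
        intro x hx
        rw [interior_Icc] at hx
        rw [(hdw x).deriv]
        have hql : q x * u x ≤ 0 := mul_nonpos_of_nonneg_of_nonpos
          (hq0 x (hsub x (lt_of_le_of_lt hmx₀ hx.1) hx.2.le)) (hgood x hx).1.le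
        have : ψ x < 0 := hψneg x ⟨hmx₀.trans hx.1.le, hx.2⟩
        linarith
      have humono : StrictMonoOn u (Icc (sInf A) l) := by
        apply strictMonoOn_of_deriv_pos (convex_Icc _ _) hcu.continuousOn
        intro x hx
        rw [interior_Icc] at hx
        have hx' : x ∈ Icc (0:ℝ) l := hsub x (lt_of_le_of_lt hmx₀ hx.1) hx.2.le
        rw [(hdu x hx').deriv]
        exact div_pos (hgood x hx).2 (hσpos x hx')
      have hs₁ : (sInf A + l)/2 ∈ Ioo (sInf A) l := ⟨by linarith, by linarith⟩
      have hwm : 0 < w (sInf A) := by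
        have h1 := hwanti (left_mem_Icc.mpr hml.le) (⟨hs₁.1.le, hs₁.2.le⟩ : _ ∈ Icc (sInf A) l) hs₁.1
        exact lt_trans (hgood _ hs₁).2 h1
      have hum : u (sInf A) < 0 := by
        have h1 := humono (left_mem_Icc.mpr hml.le) (⟨hs₁.1.le, hs₁.2.le⟩ : _ ∈ Icc (sInf A) l) hs₁.1
        exact lt_trans h1 (hgood _ hs₁).1
      have hnh : {x | u x < 0 ∧ 0 < w x} ∈ 𝓝 (sInf A) := by
        have h1 : {x | u x < 0} ∈ 𝓝 (sInf A) := (isOpen_lt hcu continuous_const).mem_nhds hum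
        have h2 : {x | 0 < w x} ∈ 𝓝 (sInf A) := (isOpen_lt continuous_const hcw).mem_nhds hwm
        exact Filter.inter_mem h1 h2
      obtain ⟨c', hc'1, hc'2, hc'3⟩ := near_pt hx₀m hnh
      have hc'A : c' ∈ A := by
        refine ⟨⟨hc'1, le_of_lt (hc'2.trans hml)⟩, ?_⟩
        intro s hs
        rcases le_or_gt s (sInf A) with h | h
        · exact hc'3 s ⟨hs.1, h⟩
        · exact hgood s ⟨h, hs.2⟩
      have := csInf_le hAbdd hc'A
      linarith
    -- sInf A = x₀ : φ strictly decreasing, contradiction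
    have hφanti : StrictAntiOn φ (Icc x₀ l) := by
      apply strictAntiOn_of_deriv_neg (convex_Icc _ _) hcφ.continuousOn
      intro x hx
      rw [interior_Icc] at hx
      rw [(hdφ x).deriv]
      exact (hgood x (by rwa [hmm])).1
    have hs₁ : (x₀ + l)/2 ∈ Ioo x₀ l := ⟨by linarith, by linarith⟩
    have := hφanti (left_mem_Icc.mpr hx₀l.le) (⟨hs₁.1.le, hs₁.2.le⟩ : _ ∈ Icc x₀ l) hs₁.1
    rw [hφx₀] at this
    exact absurd (hpos _ hs₁) (by linarith)
  -- Part II : u l < 0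
  have hul' : u l < 0 := by
    rcases lt_or_eq_of_le hul with h | h
    · exact h
    · -- u l = 0
      exfalso
      have hWl : 0 < ψ l + q l * u l := by rw [h, mul_zero, add_zero]; exact hψl
      obtain ⟨c, hc1, hc2, hc3⟩ := near_left (P := fun x => 0 < ψ x + q x * u x) hx₀l
        ((isOpen_lt continuous_const (by continuity)).mem_nhds hWl)
      have hwmono : StrictMonoOn w (Icc c l) := by
        apply strictMonoOn_of_deriv_pos (convex_Icc _ _) hcw.continuousOn
        intro x hx
        rw [interior_Icc] at hx
        rw [(hdw x).deriv]
        exact hc3 x hx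
      have hwneg : ∀ s ∈ Ioo c l, w s < 0 := by
        intro s hs
        have := hwmono (⟨hs.1.le, hs.2.le⟩ : s ∈ Icc c l) (right_mem_Icc.mpr hc2.le) hs.2
        rwa [hwl] at this
      have huanti : StrictAntiOn u (Icc c l) := by
        apply strictAntiOn_of_deriv_neg (convex_Icc _ _) hcu.continuousOn
        intro x hx
        rw [interior_Icc] at hx
        have hx' : x ∈ Icc (0:ℝ) l := hsub x (lt_of_le_of_lt hc1 hx.1) hx.2.le
        rw [(hdu x hx').deriv]
        exact div_neg_of_neg_of_pos (hwneg x hx) (hσpos x hx')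
      have hupos : ∀ s ∈ Ioo c l, 0 < u s := by
        intro s hs
        have := huanti (⟨hs.1.le, hs.2.le⟩ : s ∈ Icc c l) (right_mem_Icc.mpr hc2.le) hs.2
        rwa [h] at this
      have hφmono : StrictMonoOn φ (Icc c l) := by
        apply strictMonoOn_of_deriv_pos (convex_Icc _ _) hcφ.continuousOn
        intro x hx
        rw [interior_Icc] at hx
        rw [(hdφ x).deriv]
        exact hupos x hx
      have hs₁ : (c + l)/2 ∈ Ioo c l := ⟨by linarith, by linarith⟩
      have := hφmono (⟨hs₁.1.le, hs₁.2.le⟩ : _ ∈ Icc c l) (right_mem_Icc.mpr hc2.le) hs₁.2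
      rw [hφl] at this
      have h2 : (c + l)/2 ∈ Ioo x₀ l := ⟨lt_of_le_of_lt hc1 hs₁.1, hs₁.2⟩
      exact absurd (hpos _ h2) (by linarith)
  exact ⟨hul', hψl⟩

lemma boussinesq_lam_pos (l lam : ℝ) (hl : 0 < l) (σ q ρ φ u w ψ : ℝ → ℝ)
    (hcφ : Continuous φ) (hcu : Continuous u) (hcw : Continuous w) (hcψ : Continuous ψ)
    (hdφ : ∀ x, HasDerivAt φ (u x) x)
    (hdu : ∀ x ∈ Icc (0:ℝ) l, HasDerivAt u (w x / σ x) x)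
    (hdw : ∀ x, HasDerivAt w (ψ x + q x * u x) x)
    (hdψ : ∀ x ∈ Icc (0:ℝ) l, HasDerivAt ψ (lam * ρ x * φ x) x)
    (hρpos : ∀ x ∈ Icc (0:ℝ) l, 0 < ρ x) (hσpos : ∀ x ∈ Icc (0:ℝ) l, 0 < σ x)
    (hq0 : ∀ x ∈ Icc (0:ℝ) l, 0 ≤ q x)
    (hφ0 : φ 0 = 0) (hw0 : w 0 = 0) (hφl : φ l = 0) (hwl : w l = 0)
    (hnt : ∃ x ∈ Icc (0:ℝ) l, φ x ≠ 0) : 0 < lam := by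
  by_contra hcon
  push_neg at hcon
  set H := fun x => ψ x * φ x - w x * u x with hHdef
  have hdH : ∀ x ∈ Icc (0:ℝ) l,
      HasDerivAt H (lam * ρ x * φ x * φ x - q x * u x * u x - w x * w x / σ x) x := by
    intro x hx
    have hσx : σ x ≠ 0 := ne_of_gt (hσpos x hx)
    have h1 := ((hdψ x hx).mul (hdφ x)).sub ((hdw x).mul (hdu x hx))
    exact h1.congr_deriv (by ring)
  have hH0 : H 0 = 0 := by simp [hHdef, hφ0, hw0]
  have hHl : H l = 0 := by simp [hHdef, hφl, hwl]
  have hterms : ∀ x ∈ Icc (0:ℝ) l,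
      lam * ρ x * φ x * φ x ≤ 0 ∧ 0 ≤ q x * u x * u x ∧ 0 ≤ w x * w x / σ x := by
    intro x hx
    refine ⟨?_, ?_, div_nonneg (mul_self_nonneg _) (hσpos x hx).le⟩
    · have h := mul_nonpos_of_nonpos_of_nonneg hcon
        (mul_nonneg (hρpos x hx).le (mul_self_nonneg (φ x)))
      calc lam * ρ x * φ x * φ x = lam * (ρ x * (φ x * φ x)) := by ring
        _ ≤ 0 := h
    · calc (0:ℝ) ≤ q x * (u x * u x) := mul_nonneg (hq0 x hx) (mul_self_nonneg _)
        _ = q x * u x * u x := by ring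
  have hanti : AntitoneOn H (Icc 0 l) := by
    apply antitoneOn_of_deriv_nonpos (convex_Icc _ _) ((hcψ.mul hcφ).sub (hcw.mul hcu)).continuousOn
    · intro x hx
      rw [interior_Icc] at hx
      exact ((hdH x (Ioo_subset_Icc_self hx)).differentiableAt).differentiableWithinAt
    · intro x hx
      rw [interior_Icc] at hx
      have hx' := Ioo_subset_Icc_self hx
      rw [show deriv (ψ * φ - w * u) x = deriv H x from rfl, (hdH x hx').deriv]
      obtain ⟨t1, t2, t3⟩ := hterms x hx'
      linarith
  have hHzero : ∀ x ∈ Icc (0:ℝ) l, H x = 0 := by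
    intro x hx
    have h1 := hanti (left_mem_Icc.mpr hl.le) hx hx.1
    have h2 := hanti hx (right_mem_Icc.mpr hl.le) hx.2
    rw [hH0] at h1; rw [hHl] at h2; linarith
  have hwzero : ∀ x ∈ Icc (0:ℝ) l, w x = 0 := by
    have hIoo : ∀ x ∈ Ioo (0:ℝ) l, w x = 0 := by
      intro x hx
      have hx' := Ioo_subset_Icc_self hx
      have hev : H =ᶠ[𝓝 x] fun _ => (0:ℝ) := by
        filter_upwards [Ioo_mem_nhds hx.1 hx.2] with y hy
        exact hHzero y (Ioo_subset_Icc_self hy)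
      have hd0 : HasDerivAt H 0 x := (hasDerivAt_const x (0:ℝ)).congr_of_eventuallyEq hev
      have heq := hd0.unique (hdH x hx')
      obtain ⟨t1, t2, t3⟩ := hterms x hx'
      have hw2 : w x * w x / σ x ≤ 0 := by linarith
      have hw3 : w x * w x ≤ 0 := by
        by_contra hcc
        push_neg at hcc
        exact absurd (div_pos hcc (hσpos x hx')) (not_lt.mpr hw2)
      exact mul_self_eq_zero.mp (le_antisymm hw3 (mul_self_nonneg _))
    intro x hx
    rcases eq_or_lt_of_le hx.1 with h0 | h0
    · rw [← h0]; exact hw0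
    rcases eq_or_lt_of_le hx.2 with h1 | h1
    · rw [h1]; exact hwl
    exact hIoo x ⟨h0, h1⟩
  have hdu0 : ∀ x ∈ Icc (0:ℝ) l, HasDerivAt u 0 x := by
    intro x hx
    have := hdu x hx
    rwa [hwzero x hx, zero_div] at this
  have hconst : ∀ (f : ℝ → ℝ), Continuous f → (∀ x ∈ Icc (0:ℝ) l, HasDerivAt f 0 x) →
      ∀ x ∈ Icc (0:ℝ) l, f x = f 0 := by
    intro f hcf hdf x hx
    have hdiff : DifferentiableOn ℝ f (interior (Icc (0:ℝ) l)) := by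
      intro y hy
      rw [interior_Icc] at hy
      exact ((hdf y (Ioo_subset_Icc_self hy)).differentiableAt).differentiableWithinAt
    have hderiv : ∀ y ∈ interior (Icc (0:ℝ) l), deriv f y = 0 := by
      intro y hy
      rw [interior_Icc] at hy
      exact (hdf y (Ioo_subset_Icc_self hy)).deriv
    have ha := antitoneOn_of_deriv_nonpos (convex_Icc _ _) hcf.continuousOn hdiff
      (fun y hy => le_of_eq (hderiv y hy))
    have hm := monotoneOn_of_deriv_nonneg (convex_Icc _ _) hcf.continuousOn hdiff
      (fun y hy => ge_of_eq (hderiv y hy))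
    exact le_antisymm (ha (left_mem_Icc.mpr hl.le) hx hx.1) (hm (left_mem_Icc.mpr hl.le) hx hx.1)
  have huconst := hconst u hcu hdu0
  have hgconst := hconst (fun x => φ x - u 0 * x)
    (hcφ.sub (continuous_const.mul continuous_id))
    (by
      intro x hx
      have h1 := (hdφ x).sub ((hasDerivAt_id x).const_mul (u 0))
      rw [huconst x hx] at h1
      simp only [id, mul_one, sub_self] at h1
      exact h1)
  have hφlin : ∀ x ∈ Icc (0:ℝ) l, φ x = u 0 * x := by
    intro x hx
    have := hgconst x hx
    simp only [hφ0, mul_zero, sub_zero] at this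
    linarith
  have hu00 : u 0 = 0 := by
    have := hφlin l (right_mem_Icc.mpr hl.le)
    rw [hφl] at this
    rw [eq_comm, mul_eq_zero] at this
    rcases this with h | h
    · exact h
    · exact absurd h (ne_of_gt hl)
  obtain ⟨x, hx, hne⟩ := hnt
  exact hne (by rw [hφlin x hx, hu00, zero_mul])

/-- **Sign condition at the controlled end.** If `lam` is an eigenvalue with
eigenfunction `φ`, then `φ'(l) ⬝ Tφ(l) < 0` where `Tφ = (σ φ'')' − q φ'`. -/
theorem boussinesq_eigenfunction_sign_condition
    (l : ℝ) (hl : 0 < l)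
    (ρ σ q : ℝ → ℝ)
    (hρs : ContDiff ℝ 3 ρ) (hσs : ContDiff ℝ 3 σ) (hqs : ContDiff ℝ 1 q)
    (ρ0 σ0 : ℝ) (hρ0 : 0 < ρ0) (hσ0 : 0 < σ0)
    (hρb : ∀ x ∈ Icc (0:ℝ) l, ρ0 ≤ ρ x)
    (hσb : ∀ x ∈ Icc (0:ℝ) l, σ0 ≤ σ x)
    (hqb : ∀ x ∈ Icc (0:ℝ) l, 0 ≤ q x)
    (lam : ℝ) (φ : ℝ → ℝ)
    (hφ : IsBoussinesqEigenpair σ q ρ l lam φ) :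
    deriv φ l * (deriv (fun t => σ t * deriv (deriv φ) t) l - q l * deriv φ l) < 0 := by
  obtain ⟨hsm, hnt, heq, hbc0, hbc0'', hbcl, hbcl''⟩ := hφ
  set u : ℝ → ℝ := deriv φ with hu_def
  set φ2 : ℝ → ℝ := deriv u with hφ2_def
  set w : ℝ → ℝ := fun t => σ t * φ2 t with hw_def
  set ψ : ℝ → ℝ := fun x => deriv w x - q x * u x with hψ_def
  -- smoothness
  have hu3 : ContDiff ℝ 3 u := by
    have h4 : ContDiff ℝ ((3:WithTop ℕ∞)+1) φ := by norm_num at hsm ⊢; exact hsm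
    exact (contDiff_succ_iff_deriv.mp h4).2.2
  have hφ2c : ContDiff ℝ 2 φ2 := by
    have h3 : ContDiff ℝ ((2:WithTop ℕ∞)+1) u := by norm_num at hu3 ⊢; exact hu3
    exact (contDiff_succ_iff_deriv.mp h3).2.2
  have hφ3c : ContDiff ℝ 1 (deriv φ2) := by
    have h2 : ContDiff ℝ ((1:WithTop ℕ∞)+1) φ2 := by norm_num at hφ2c ⊢; exact hφ2c
    exact (contDiff_succ_iff_deriv.mp h2).2.2
  have hw2 : ContDiff ℝ 2 w := (hσs.of_le (by norm_num)).mul hφ2c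
  have hw1 : ContDiff ℝ 1 (deriv w) := by
    have h2 : ContDiff ℝ ((1:WithTop ℕ∞)+1) w := by norm_num at hw2 ⊢; exact hw2
    exact (contDiff_succ_iff_deriv.mp h2).2.2
  have hψ1 : ContDiff ℝ 1 ψ := hw1.sub (hqs.mul (hu3.of_le (by norm_num)))
  have hcφ : Continuous φ := hsm.continuous
  have hcu : Continuous u := hu3.continuous
  have hcw : Continuous w := hw2.continuous
  have hcψ : Continuous ψ := hψ1.continuous
  have hcq : Continuous q := hqs.continuous
  -- positivity on the interval
  have hρpos : ∀ x ∈ Icc (0:ℝ) l, 0 < ρ x := fun x hx => lt_of_lt_of_le hρ0 (hρb x hx)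
  have hσpos : ∀ x ∈ Icc (0:ℝ) l, 0 < σ x := fun x hx => lt_of_lt_of_le hσ0 (hσb x hx)
  -- derivative facts
  have hdφ : ∀ x, HasDerivAt φ (u x) x :=
    fun x => (hsm.differentiable (by norm_num) x).hasDerivAt
  have hdu : ∀ x ∈ Icc (0:ℝ) l, HasDerivAt u (w x / σ x) x := by
    intro x hx
    have hσx : σ x ≠ 0 := ne_of_gt (hσpos x hx)
    have h := (hu3.differentiable (by norm_num) x).hasDerivAt
    have heq2 : w x / σ x = φ2 x := by rw [hw_def]; field_simp
    rw [heq2]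
    exact h
  have hdw : ∀ x, HasDerivAt w (ψ x + q x * u x) x := by
    intro x
    have h := (hw2.differentiable (by norm_num) x).hasDerivAt
    have heq2 : ψ x + q x * u x = deriv w x := by rw [hψ_def]; ring
    rwa [heq2]
  have hdψ : ∀ x ∈ Icc (0:ℝ) l, HasDerivAt ψ (lam * ρ x * φ x) x := by
    intro x hx
    have hd1 : HasDerivAt (deriv w) (deriv (deriv w) x) x :=
      (hw1.differentiable (by norm_num) x).hasDerivAt
    have hd2 : HasDerivAt (fun t => q t * u t) (deriv (fun t => q t * u t) x) x :=
      (((hqs.differentiable (by norm_num)).mul (hu3.differentiable (by norm_num))) x).hasDerivAt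
    have h := hd1.sub hd2
    have heval : deriv (deriv w) x - deriv (fun t => q t * u t) x = lam * ρ x * φ x := heq x hx
    rw [heval] at h
    exact h
  -- boundary values of w
  have hw0 : w 0 = 0 := by rw [hw_def]; simp only; rw [show φ2 0 = 0 from hbc0'', mul_zero]
  have hwl : w l = 0 := by rw [hw_def]; simp only; rw [show φ2 l = 0 from hbcl'', mul_zero]
  -- the jet at l cannot vanish entirely (Gronwall)
  have hjetF : ¬(u l = 0 ∧ ψ l = 0) := by
    rintro ⟨hul0, hψl0⟩
    obtain ⟨Cq, hCq⟩ := isCompact_Icc.exists_bound_of_continuousOn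
      (s := Icc (0:ℝ) l) hcq.continuousOn
    obtain ⟨Cρ, hCρ⟩ := isCompact_Icc.exists_bound_of_continuousOn
      (s := Icc (0:ℝ) l) hρs.continuous.continuousOn
    have hCq0 : 0 ≤ Cq := le_trans (norm_nonneg _) (hCq 0 (left_mem_Icc.mpr hl.le))
    have hCρ0 : 0 ≤ Cρ := le_trans (norm_nonneg _) (hCρ 0 (left_mem_Icc.mpr hl.le))
    set K : ℝ := 1 + 1/σ0 + (1 + Cq) + |lam| * Cρ with hK_def
    have hK1 : (1:ℝ) ≤ K := by
      have := mul_nonneg (abs_nonneg lam) hCρ0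
      have h2 : 0 < 1/σ0 := by positivity
      rw [hK_def]; linarith
    have hKσ : 1/σ0 ≤ K := by
      have := mul_nonneg (abs_nonneg lam) hCρ0
      rw [hK_def]; linarith
    have hKq : 1 + Cq ≤ K := by
      have := mul_nonneg (abs_nonneg lam) hCρ0
      have h2 : 0 < 1/σ0 := by positivity
      rw [hK_def]; linarith
    have hKρ : |lam| * Cρ ≤ K := by
      have h2 : 0 < 1/σ0 := by positivity
      rw [hK_def]; linarith
    set f : ℝ → ℝ × ℝ × ℝ × ℝ := fun t => (φ t, u t, w t, ψ t) with hf_def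
    set F : ℝ → ℝ × ℝ × ℝ × ℝ :=
      fun t => (u t, w t / σ t, ψ t + q t * u t, lam * ρ t * φ t) with hF_def
    have hdf : ∀ t ∈ Icc (0:ℝ) l, HasDerivAt f (F t) t := by
      intro t ht
      exact (hdφ t).prodMk ((hdu t ht).prodMk ((hdw t).prodMk (hdψ t ht)))
    have hcomp : ∀ t, ‖φ t‖ ≤ ‖f t‖ ∧ ‖u t‖ ≤ ‖f t‖ ∧ ‖w t‖ ≤ ‖f t‖ ∧ ‖ψ t‖ ≤ ‖f t‖ := by
      intro t
      refine ⟨norm_fst_le (f t), ?_, ?_, ?_⟩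
      · exact le_trans (norm_fst_le (f t).2) (norm_snd_le (f t))
      · exact le_trans (le_trans (norm_fst_le (f t).2.2) (norm_snd_le (f t).2)) (norm_snd_le (f t))
      · exact le_trans (le_trans (norm_snd_le (f t).2.2) (norm_snd_le (f t).2)) (norm_snd_le (f t))
    have hbound : ∀ t ∈ Icc (0:ℝ) l, ‖F t‖ ≤ K * ‖f t‖ := by
      intro t ht
      obtain ⟨e1, e2, e3, e4⟩ := hcomp t
      have hft0 : 0 ≤ ‖f t‖ := norm_nonneg _
      have hσt := hσpos t ht
      have hσbt := hσb t ht
      have hK0 : (0:ℝ) ≤ K := by linarith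
      have b1 : ‖u t‖ ≤ K * ‖f t‖ := le_trans e2 (le_mul_of_one_le_left hft0 hK1)
      have b2 : ‖w t / σ t‖ ≤ K * ‖f t‖ := by
        have h1 : ‖w t / σ t‖ = ‖w t‖ / σ t := by
          rw [norm_div, Real.norm_eq_abs (σ t), abs_of_pos hσt]
        have h2 : ‖w t‖ / σ t ≤ ‖w t‖ / σ0 :=
          div_le_div_of_nonneg_left (norm_nonneg _) hσ0 hσbt
        have h3 : ‖w t‖ / σ0 = (1/σ0) * ‖w t‖ := by ring
        have h4 : (1/σ0) * ‖w t‖ ≤ K * ‖f t‖ :=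
          mul_le_mul hKσ e3 (norm_nonneg _) hK0
        linarith [h1.le, h2, h3.le]
      have b3 : ‖ψ t + q t * u t‖ ≤ K * ‖f t‖ := by
        have h1 : ‖ψ t + q t * u t‖ ≤ ‖ψ t‖ + ‖q t‖ * ‖u t‖ := by
          calc ‖ψ t + q t * u t‖ ≤ ‖ψ t‖ + ‖q t * u t‖ := norm_add_le _ _
            _ = ‖ψ t‖ + ‖q t‖ * ‖u t‖ := by rw [norm_mul]
        have h2 := hCq t ht
        have h3 : ‖q t‖ * ‖u t‖ ≤ Cq * ‖f t‖ := mul_le_mul h2 e2 (norm_nonneg _) hCq0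
        have h4 := mul_le_mul_of_nonneg_right hKq hft0
        nlinarith
      have b4 : ‖lam * ρ t * φ t‖ ≤ K * ‖f t‖ := by
        have h1 : ‖lam * ρ t * φ t‖ = |lam| * ‖ρ t‖ * ‖φ t‖ := by
          rw [norm_mul, norm_mul, Real.norm_eq_abs lam]
        have h2 := hCρ t ht
        have h3 : |lam| * ‖ρ t‖ * ‖φ t‖ ≤ |lam| * Cρ * ‖f t‖ :=
          mul_le_mul (mul_le_mul_of_nonneg_left h2 (abs_nonneg lam)) e1 (norm_nonneg _)
            (mul_nonneg (abs_nonneg lam) hCρ0)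
        have h4 := mul_le_mul_of_nonneg_right hKρ hft0
        nlinarith
      have hnorm : ‖F t‖ = max ‖u t‖ (max ‖w t / σ t‖ (max ‖ψ t + q t * u t‖ ‖lam * ρ t * φ t‖)) := by
        rw [hF_def]
        simp only [Prod.norm_def]
      rw [hnorm]
      exact max_le b1 (max_le b2 (max_le b3 b4))
    have hfl : f l = 0 := by
      rw [hf_def]
      simp only [Prod.mk_eq_zero]
      exact ⟨hbcl, hul0, hwl, hψl0⟩
    have hvan := vanish_backward hdf hbound hfl
    obtain ⟨x, hx, hne⟩ := hnt
    have := hvan x hx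
    apply hne
    have := congrArg Prod.fst this
    simpa using this
  -- positivity of the eigenvalue
  have hlam : 0 < lam := boussinesq_lam_pos l lam hl σ q ρ φ u w ψ hcφ hcu hcw hcψ
    hdφ hdu hdw hdψ hρpos hσpos hqb hbc0 hw0 hbcl hwl hnt
  -- the set of zeros of φ before l
  set S : Set ℝ := {x | x ∈ Ico (0:ℝ) l ∧ φ x = 0} with hS_def
  have hS0 : (0:ℝ) ∈ S := ⟨⟨le_rfl, hl⟩, hbc0⟩
  have hSne : S.Nonempty := ⟨0, hS0⟩
  have hSb : BddAbove S := ⟨l, fun x hx => hx.1.2.le⟩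
  have hx₀0 : 0 ≤ sSup S := le_csSup hSb hS0
  have hx₀l : sSup S ≤ l := csSup_le hSne fun x hx => hx.1.2.le
  rcases eq_or_lt_of_le hx₀l with hacc | hx₀lt
  · -- zeros accumulate at l : contradiction with hjetF
    exfalso
    have hφacc : ∀ ε > 0, ∃ x, l - ε < x ∧ x < l ∧ φ x = 0 := by
      intro ε hε
      obtain ⟨a, haS, hal⟩ := exists_lt_of_lt_csSup hSne (show l - ε < sSup S by rw [hacc]; linarith)
      exact ⟨a, hal, haS.1.2, haS.2⟩
    have huacc : ∀ ε > 0, ∃ x, l - ε < x ∧ x < l ∧ u x = 0 := by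
      intro ε hε
      obtain ⟨a, ha1, ha2, ha3⟩ := hφacc ε hε
      obtain ⟨c, hc, hc0⟩ := exists_hasDerivAt_eq_zero ha2 hcφ.continuousOn
        (by rw [ha3, hbcl]) (fun x _ => hdφ x)
      exact ⟨c, lt_trans ha1 hc.1, hc.2, hc0⟩
    have hul0 : u l = 0 := by
      apply zero_of_accum hcu
      intro ε hε
      obtain ⟨x, h1, h2, h3⟩ := huacc ε hε
      exact ⟨x, by rw [abs_sub_lt_iff]; constructor <;> linarith, h3⟩
    have hφ2acc : ∀ ε > 0, ∃ x, l - ε < x ∧ x < l ∧ φ2 x = 0 := by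
      intro ε hε
      obtain ⟨a, ha1, ha2, ha3⟩ := huacc ε hε
      obtain ⟨c, hc, hc0⟩ := exists_hasDerivAt_eq_zero ha2 hcu.continuousOn
        (by rw [ha3, hul0]) (fun x _ => (hu3.differentiable (by norm_num) x).hasDerivAt)
      exact ⟨c, lt_trans ha1 hc.1, hc.2, hc0⟩
    have hφ3acc : ∀ ε > 0, ∃ x, l - ε < x ∧ x < l ∧ deriv φ2 x = 0 := by
      intro ε hε
      obtain ⟨a, ha1, ha2, ha3⟩ := hφ2acc ε hε
      obtain ⟨c, hc, hc0⟩ := exists_hasDerivAt_eq_zero ha2 hφ2c.continuous.continuousOn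
        (by rw [ha3, show φ2 l = 0 from hbcl'']) (fun x _ => (hφ2c.differentiable (by norm_num) x).hasDerivAt)
      exact ⟨c, lt_trans ha1 hc.1, hc.2, hc0⟩
    have hφ3l : deriv φ2 l = 0 := by
      apply zero_of_accum hφ3c.continuous
      intro ε hε
      obtain ⟨x, h1, h2, h3⟩ := hφ3acc ε hε
      exact ⟨x, by rw [abs_sub_lt_iff]; constructor <;> linarith, h3⟩
    apply hjetF
    refine ⟨hul0, ?_⟩
    have hdwl : HasDerivAt w (deriv σ l * φ2 l + σ l * deriv φ2 l) l := by
      exact ((hσs.differentiable (by norm_num) l).hasDerivAt.mul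
        (hφ2c.differentiable (by norm_num) l).hasDerivAt)
    have : deriv w l = deriv σ l * φ2 l + σ l * deriv φ2 l := hdwl.deriv
    rw [hψ_def]
    simp only
    rw [this, show φ2 l = 0 from hbcl'', hφ3l, hul0]
    ring
  · -- there is a last zero x₀ < l
    set x₀ := sSup S with hx₀_def
    have hφx₀ : φ x₀ = 0 := by
      apply zero_of_accum hcφ
      intro ε hε
      obtain ⟨a, haS, hal⟩ := exists_lt_of_lt_csSup hSne (show x₀ - ε < sSup S by linarith)
      refine ⟨a, ?_, haS.2⟩
      have : a ≤ x₀ := le_csSup hSb haS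
      rw [abs_sub_lt_iff]; constructor <;> linarith
    have hnz : ∀ x ∈ Ioo x₀ l, φ x ≠ 0 := by
      intro x hx hz
      have : x ∈ S := ⟨⟨le_trans hx₀0 hx.1.le, hx.2⟩, hz⟩
      exact absurd (le_csSup hSb this) (not_le.mpr hx.1)
    have hm : (x₀ + l)/2 ∈ Ioo x₀ l := ⟨by linarith, by linarith⟩
    have hivt : ∀ y ∈ Ioo x₀ l, ∀ z ∈ Ioo x₀ l, φ y < 0 → 0 < φ z → False := by
      intro y hy z hz h1 h2
      have hcont : ContinuousOn φ (uIcc y z) := hcφ.continuousOn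
      have h0mem : (0:ℝ) ∈ uIcc (φ y) (φ z) := by rw [mem_uIcc]; left; exact ⟨h1.le, h2.le⟩
      obtain ⟨c, hc, hc0⟩ := intermediate_value_uIcc hcont h0mem
      have hcmem : c ∈ Ioo x₀ l := by
        rcases mem_uIcc.mp hc with h' | h'
        · exact ⟨lt_of_lt_of_le hy.1 h'.1, lt_of_le_of_lt h'.2 hz.2⟩
        · exact ⟨lt_of_lt_of_le hz.1 h'.1, lt_of_le_of_lt h'.2 hy.2⟩
      exact hnz c hcmem hc0
    have hsign : (∀ x ∈ Ioo x₀ l, 0 < φ x) ∨ (∀ x ∈ Ioo x₀ l, φ x < 0) := by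
      rcases lt_or_gt_of_ne (hnz _ hm) with hneg | hpos
      · right; intro y hy
        rcases lt_or_gt_of_ne (hnz y hy) with h | h
        · exact h
        · exact (hivt _ hm y hy hneg h).elim
      · left; intro y hy
        rcases lt_or_gt_of_ne (hnz y hy) with h | h
        · exact (hivt y hy _ hm h hpos).elim
        · exact h
    rcases hsign with hpos | hneg
    · obtain ⟨hul, hψl⟩ := boussinesq_key l lam x₀ σ q ρ φ u w ψ hcφ hcu hcw hcψ hcq
        hdφ hdu hdw hdψ hρpos hσpos hqb hlam hx₀0 hx₀lt hφx₀ hpos hbcl hwl hjetF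
      have h3 : ψ l = deriv w l - q l * u l := rfl
      show u l * (deriv w l - q l * u l) < 0
      rw [← h3]
      exact mul_neg_of_neg_of_pos hul hψl
    · have hjetF' : ¬((-u l) = 0 ∧ (-ψ l) = 0) := by
        rintro ⟨h1, h2⟩
        exact hjetF ⟨neg_eq_zero.mp h1, neg_eq_zero.mp h2⟩
      obtain ⟨hul, hψl⟩ := boussinesq_key l lam x₀ σ q ρ (fun t => -φ t) (fun t => -u t)
        (fun t => -w t) (fun t => -ψ t) hcφ.neg hcu.neg hcw.neg hcψ.neg hcq
        (fun x => (hdφ x).neg)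
        (by
          intro x hx
          have h := (hdu x hx).neg
          rw [show -(w x / σ x) = -w x / σ x from (neg_div _ _).symm] at h
          exact h)
        (by
          intro x
          have h := (hdw x).neg
          rw [show -(ψ x + q x * u x) = -ψ x + q x * (-u x) by ring] at h
          exact h)
        (by
          intro x hx
          have h := (hdψ x hx).neg
          rw [show -(lam * ρ x * φ x) = lam * ρ x * (-φ x) by ring] at h
          exact h)
        hρpos hσpos hqb hlam hx₀0 hx₀lt (by show -φ x₀ = 0; rw [hφx₀]; ring)
        (fun x hx => neg_pos.mpr (hneg x hx)) (by show -φ l = 0; rw [hbcl]; ring)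
        (by show -w l = 0; rw [hwl]; ring)
        hjetF'
      have h1 : -u l < 0 := hul
      have h2 : (0:ℝ) < -ψ l := hψl
      have h3 : ψ l = deriv w l - q l * u l := rfl
      show u l * (deriv w l - q l * u l) < 0
      rw [← h3]
      exact mul_neg_of_pos_of_neg (by linarith) (by linarith)
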